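/- arXiv:1402.3579 — 4 statements merged into one kernel-verified Lean document; each statement's English description precedes it below -/
import Mathlib

section
/- Let Δ : ℕ → ℕ → ℕ satisfy: (i) Δ(d, n) ≤ Δ(d-1, n-1) + 2·Δ(d, ⌊n/2⌋) + 2 whenever 2 ≤ d ≤ ⌊n/2⌋; (ii) Δ(d, n) ≤ Δ(d-1, n-1) whenever n < 2d and d ≥ 2; (iii) Δ(d, d) = 0 for all d; (iv) Δ(1, n) ≤ 1 for n ≥ 2; (v) Δ(2, n) ≤ n - 2; (vi) Δ(3, n) ≤ n - 3 for n ≥ 3; (vii) Δ(d, n) ≤ Δ(d, m) whenever n ≤ m. Then for all 1 ≤ d ≤ n, Δ(d, n) ≤ (n - d)^(log₂ d) (real power, with the convention that the bound is interpreted as a real number and 0^0 = 1, and Δ(1,1) = 0). -/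
open Real

lemma kk_psi (D u : ℝ) (hD : 4 ≤ D) (hu : D ≤ u) :
    u ^ (logb 2 (D - 1) - logb 2 D) ≤ 1 - 2 / D + 1 / u := by
  have hD0 : (0:ℝ) < D := by linarith
  have hu0 : (0:ℝ) < u := by linarith
  have hq : (0:ℝ) < (D - 1) / D := div_pos (by linarith) hD0
  set x := logb 2 (D - 1) - logb 2 D with hxdef
  have hxeq : x = logb 2 ((D - 1) / D) := by
    rw [hxdef, logb_div (by linarith) (by linarith)]
  have hx0 : x ≤ 0 := by
    rw [hxeq]
    exact (logb_neg one_lt_two hq (by rw [div_lt_one hD0]; linarith)).le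
  have h2x : (2:ℝ) ^ x = (D - 1) / D := by
    rw [hxeq]; exact rpow_logb two_pos (by norm_num) hq
  have hα : (2:ℝ) ≤ logb 2 D := by
    rw [le_logb_iff_rpow_le one_lt_two hD0]
    calc (2:ℝ) ^ (2:ℝ) = 4 := by
          rw [show (2:ℝ) = ((2:ℕ):ℝ) by norm_num, rpow_natCast]; norm_num
      _ ≤ D := hD
  have h2α : (2:ℝ) ^ (logb 2 D) = D := rpow_logb two_pos (by norm_num) hD0
  have hK : D ^ x ≤ ((D - 1) / D) ^ (2:ℕ) := by
    have e1 : D ^ x = (2:ℝ) ^ (logb 2 D * x) := by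
      rw [rpow_mul (by norm_num : (0:ℝ) ≤ 2), h2α]
    have e2 : ((D - 1) / D) ^ (2:ℕ) = (2:ℝ) ^ (x * 2) := by
      rw [rpow_mul (by norm_num : (0:ℝ) ≤ 2), h2x,
        ← rpow_natCast ((D - 1) / D) 2]
      norm_num
    rw [e1, e2]
    apply rpow_le_rpow_of_exponent_le one_le_two
    nlinarith
  have hKval : D ^ x ≤ 1 - 2 / D + 1 / D ^ 2 := by
    have e : ((D - 1) / D) ^ (2:ℕ) = 1 - 2 / D + 1 / D ^ 2 := by
      field_simp
      ring
    rw [e] at hK; exact hK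
  rcases le_or_gt u (D ^ 2) with hcase | hcase
  · have h1 : u ^ x ≤ D ^ x := rpow_le_rpow_of_nonpos hD0 hu hx0
    have h2 : 1 / D ^ 2 ≤ 1 / u := one_div_le_one_div_of_le hu0 hcase
    linarith
  · have h1 : u ^ x ≤ (D * D) ^ x :=
      rpow_le_rpow_of_nonpos (by positivity) (by nlinarith) hx0
    have h2 : (D * D) ^ x = D ^ x * D ^ x := mul_rpow hD0.le hD0.le
    have h3 : (0:ℝ) ≤ D ^ x := (rpow_pos_of_pos hD0 x).le
    have h4 : (0:ℝ) < 1 / u := by positivity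
    have h5 : (1 - 2 / D + 1 / D ^ 2) * (1 - 2 / D + 1 / D ^ 2) ≤ 1 - 2 / D := by
      have e : 1 - 2 / D + 1 / D ^ 2 = (D - 1) ^ 2 / D ^ 2 := by
        field_simp; ring
      have e2 : 1 - 2 / D = (D - 2) / D := by field_simp
      rw [e, e2, div_mul_div_comm, div_le_div_iff₀ (by positivity) (by positivity)]
      nlinarith [sq_nonneg D, sq_nonneg (D - 1), mul_pos hD0 hD0]
    nlinarith [hKval]


lemma kk_key (D u : ℝ) (hD : 4 ≤ D) (hu : D ≤ u) :
    u ^ logb 2 (D - 1) + 2 * (((u - D) / 2) ^ logb 2 D) + 2 ≤ u ^ logb 2 D := by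
  have hD0 : (0:ℝ) < D := by linarith
  have hu0 : (0:ℝ) < u := by linarith
  have hud : (0:ℝ) ≤ u - D := by linarith
  set α := logb 2 D with hαdef
  set γ := logb 2 (D - 1) with hγdef
  have hα : (2:ℝ) ≤ α := by
    rw [hαdef, le_logb_iff_rpow_le one_lt_two hD0]
    calc (2:ℝ) ^ (2:ℝ) = 4 := by
          rw [show (2:ℝ) = ((2:ℕ):ℝ) by norm_num, rpow_natCast]; norm_num
      _ ≤ D := hD
  have h2α : (2:ℝ) ^ α = D := rpow_logb two_pos (by norm_num) hD0
  have s1 : ((u - D) / 2) ^ α = (u - D) ^ α / D := by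
    rw [div_rpow hud (by norm_num : (0:ℝ) ≤ 2), h2α]
  have huα1 : u ^ α = u ^ (α - 1) * u := by
    rw [← rpow_add_one (ne_of_gt hu0) (α - 1)]
    ring_nf
  have s2 : (u - D) ^ α ≤ u ^ (α - 1) * (u - D) := by
    have e : (u - D) ^ α = (u - D) ^ (α - 1) * (u - D) := by
      calc (u - D) ^ α = (u - D) ^ ((α - 1) + 1) := by ring_nf
        _ = (u - D) ^ (α - 1) * (u - D) ^ (1:ℝ) :=
            rpow_add' hud (by intro h; rw [sub_add_cancel] at h; linarith)
        _ = (u - D) ^ (α - 1) * (u - D) := by rw [rpow_one]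
    rw [e]
    apply mul_le_mul_of_nonneg_right _ hud
    exact rpow_le_rpow hud (by linarith) (by linarith)
  have s4 : (2:ℝ) ≤ u ^ (α - 1) := by
    have h : u ^ (1:ℝ) ≤ u ^ (α - 1) :=
      rpow_le_rpow_of_exponent_le (by linarith) (by linarith)
    rw [rpow_one] at h; linarith
  have hψ : u ^ (γ - α) ≤ 1 - 2 / D + 1 / u := kk_psi D u hD hu
  have hαpos : (0:ℝ) < u ^ α := rpow_pos_of_pos hu0 α
  have s5 : u ^ γ ≤ (1 - 2 / D) * u ^ α + u ^ (α - 1) := by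
    have e1 : u ^ γ = u ^ α * u ^ (γ - α) := by
      rw [← rpow_add hu0]; ring_nf
    have e2 : u ^ (α - 1) = u ^ α * (1 / u) := by
      rw [huα1]; field_simp
    rw [e1, e2]
    calc u ^ α * u ^ (γ - α) ≤ u ^ α * (1 - 2 / D + 1 / u) :=
          mul_le_mul_of_nonneg_left hψ hαpos.le
      _ = (1 - 2 / D) * u ^ α + u ^ α * (1 / u) := by ring
  have t1 : 2 * (((u - D) / 2) ^ α) ≤ (2 / D) * u ^ α - 2 * u ^ (α - 1) := by
    rw [s1]
    have h := mul_le_mul_of_nonneg_left s2 (by positivity : (0:ℝ) ≤ 2 / D)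
    calc 2 * ((u - D) ^ α / D) = (2 / D) * (u - D) ^ α := by ring
      _ ≤ (2 / D) * (u ^ (α - 1) * (u - D)) := h
      _ = (2 / D) * (u ^ (α - 1) * u) - 2 * u ^ (α - 1) := by
          field_simp
      _ = (2 / D) * u ^ α - 2 * u ^ (α - 1) := by rw [← huα1]
  have final : (1 - 2 / D) * u ^ α + (2 / D) * u ^ α = u ^ α := by ring
  linarith


theorem stmt_1 (Δ : ℕ → ℕ → ℕ)
    (h1 : ∀ d n, 2 ≤ d → d ≤ n / 2 → Δ d n ≤ Δ (d - 1) (n - 1) + 2 * Δ d (n / 2) + 2)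
    (h2 : ∀ d n, n < 2 * d → 2 ≤ d → Δ d n ≤ Δ (d - 1) (n - 1))
    (h3 : ∀ d, Δ d d = 0)
    (h4 : ∀ n, 2 ≤ n → Δ 1 n ≤ 1)
    (h5 : ∀ n, Δ 2 n ≤ n - 2)
    (h6 : ∀ n, 3 ≤ n → Δ 3 n ≤ n - 3)
    (h7 : ∀ d n m, n ≤ m → Δ d n ≤ Δ d m) :
    ∀ d n, 1 ≤ d → d ≤ n → (Δ d n : ℝ) ≤ ((n : ℝ) - d) ^ (Real.logb 2 d) := by
  suffices H : ∀ N d n, d + n ≤ N → 1 ≤ d → d ≤ n →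
      (Δ d n : ℝ) ≤ ((n : ℝ) - d) ^ (Real.logb 2 d) from
    fun d n hd hdn => H (d + n) d n le_rfl hd hdn
  intro N
  induction N with
  | zero => intro d n h hd _; omega
  | succ N ih =>
    intro d n hN hd hdn
    rcases lt_or_ge d 4 with hd4 | hd4
    · interval_cases d
      · -- d = 1
        simp only [Nat.cast_one, Real.logb_one, Real.rpow_zero]
        rcases eq_or_lt_of_le hdn with h | h
        · rw [← h, h3]; norm_num
        · have := h4 n (by omega)
          calc (Δ 1 n : ℝ) ≤ 1 := by exact_mod_cast this
            _ ≤ 1 := le_rfl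
      · -- d = 2
        have hl : Real.logb 2 ((2:ℕ):ℝ) = 1 := by
          norm_num [Real.logb_self_eq_one]
        rw [hl, rpow_one]
        calc (Δ 2 n : ℝ) ≤ ((n - 2 : ℕ) : ℝ) := by exact_mod_cast h5 n
          _ = (n:ℝ) - 2 := by
              rw [Nat.cast_sub hdn]; norm_num
          _ ≤ (n:ℝ) - ((2:ℕ):ℝ) := by norm_num
      · -- d = 3
        rcases eq_or_lt_of_le hdn with h | h
        · rw [← h, h3]
          push_cast
          simp only [sub_self]
          exact rpow_nonneg le_rfl _
        · have hn4 : 4 ≤ n := by omega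
          have hb1 : (1:ℝ) ≤ (n:ℝ) - ((3:ℕ):ℝ) := by
            push_cast; have : (4:ℝ) ≤ n := by exact_mod_cast hn4
            linarith
          have hexp : (1:ℝ) ≤ Real.logb 2 ((3:ℕ):ℝ) := by
            push_cast
            rw [le_logb_iff_rpow_le one_lt_two (by norm_num : (0:ℝ) < 3), rpow_one]
            norm_num
          calc (Δ 3 n : ℝ) ≤ ((n - 3 : ℕ) : ℝ) := by exact_mod_cast h6 n hdn
            _ = (n:ℝ) - ((3:ℕ):ℝ) := by rw [Nat.cast_sub hdn]
            _ = ((n:ℝ) - ((3:ℕ):ℝ)) ^ (1:ℝ) := (rpow_one _).symm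
            _ ≤ ((n:ℝ) - ((3:ℕ):ℝ)) ^ Real.logb 2 ((3:ℕ):ℝ) :=
                rpow_le_rpow_of_exponent_le hb1 hexp
    · -- d ≥ 4
      have hd0 : (0:ℝ) < (d:ℝ) := by positivity
      have hcastd : ((d - 1 : ℕ) : ℝ) = (d:ℝ) - 1 := by
        rw [Nat.cast_sub (by omega)]; norm_num
      have hcastn : ((n - 1 : ℕ) : ℝ) = (n:ℝ) - 1 := by
        rw [Nat.cast_sub (by omega)]; norm_num
      have hγα : Real.logb 2 ((d - 1 : ℕ):ℝ) ≤ Real.logb 2 (d:ℝ) := by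
        apply Real.logb_le_logb_of_le one_lt_two
        · rw [hcastd]; push_cast; linarith [show (4:ℝ) ≤ (d:ℝ) by exact_mod_cast hd4]
        · rw [hcastd]; linarith
      have hihA := ih (d - 1) (n - 1) (by omega) (by omega) (by omega)
      have hAcast : ((n - 1 : ℕ):ℝ) - ((d - 1:ℕ):ℝ) = (n:ℝ) - (d:ℝ) := by
        rw [hcastd, hcastn]; ring
      rw [hAcast] at hihA
      rcases lt_or_ge n (2 * d) with hn | hn
      · -- n < 2d: monotone reduction
        have hrec := h2 d n hn (by omega)
        have hmono : ((n:ℝ) - d) ^ Real.logb 2 ((d-1:ℕ):ℝ) ≤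
            ((n:ℝ) - d) ^ Real.logb 2 (d:ℝ) := by
          rcases eq_or_lt_of_le hdn with h | h
          · rw [← h]
            simp only [sub_self]
            rw [Real.zero_rpow, Real.zero_rpow]
            · exact ne_of_gt (Real.logb_pos one_lt_two (by push_cast; linarith [show (4:ℝ) ≤ (d:ℝ) by exact_mod_cast hd4]))
            · rw [hcastd]
              exact ne_of_gt (Real.logb_pos one_lt_two (by linarith [show (4:ℝ) ≤ (d:ℝ) by exact_mod_cast hd4]))
          · apply rpow_le_rpow_of_exponent_le _ hγα
            have : (d:ℝ) + 1 ≤ (n:ℝ) := by exact_mod_cast h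
            linarith
        calc (Δ d n : ℝ) ≤ (Δ (d-1) (n-1) : ℝ) := by exact_mod_cast hrec
          _ ≤ ((n:ℝ) - d) ^ Real.logb 2 ((d-1:ℕ):ℝ) := hihA
          _ ≤ _ := hmono
      · -- n ≥ 2d: Kalai-Kleitman recursion
        have hdiv : d ≤ n / 2 := by omega
        have hrec := h1 d n (by omega) hdiv
        have hihB := ih d (n / 2) (by omega) (by omega) hdiv
        have hα0 : 0 ≤ Real.logb 2 (d:ℝ) :=
          Real.logb_nonneg one_lt_two (by push_cast; linarith [show (4:ℝ) ≤ (d:ℝ) by exact_mod_cast hd4])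
        have hB2 : ((n/2 : ℕ):ℝ) - (d:ℝ) ≤ (((n:ℝ) - d) - d) / 2 := by
          have hle : ((n/2 : ℕ):ℝ) ≤ (n:ℝ) / 2 := by
            calc ((n/2 : ℕ):ℝ) ≤ ((n:ℕ):ℝ) / ((2:ℕ):ℝ) := Nat.cast_div_le
              _ = (n:ℝ) / 2 := by norm_num
          linarith
        have hihB' : (Δ d (n/2) : ℝ) ≤ ((((n:ℝ) - d) - d) / 2) ^ Real.logb 2 (d:ℝ) := by
          apply hihB.trans
          apply rpow_le_rpow _ hB2 hα0
          have : (d:ℝ) ≤ ((n/2:ℕ):ℝ) := by exact_mod_cast hdiv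
          linarith
        have hkey := kk_key (d:ℝ) ((n:ℝ) - d) (by exact_mod_cast hd4)
          (by
            have : ((2*d : ℕ):ℝ) ≤ (n:ℝ) := by exact_mod_cast hn
            push_cast at this; linarith)
        rw [← hcastd] at hkey
        calc (Δ d n : ℝ) ≤ (Δ (d-1) (n-1) : ℝ) + 2 * (Δ d (n/2) : ℝ) + 2 := by
              exact_mod_cast hrec
          _ ≤ ((n:ℝ) - d) ^ Real.logb 2 ((d-1:ℕ):ℝ)
              + 2 * (((((n:ℝ) - d) - d) / 2) ^ Real.logb 2 (d:ℝ)) + 2 := by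
              have h2Δ : 2 * (Δ d (n/2) : ℝ) ≤
                  2 * (((((n:ℝ) - d) - d) / 2) ^ Real.logb 2 (d:ℝ)) := by linarith
              linarith
          _ ≤ ((n:ℝ) - d) ^ Real.logb 2 (d:ℝ) := hkey
end

section
/- For all integers d ≥ 4 and n with n - d ≥ 8, the inequality (d-1)^(log₂(n-d)) + 2·d^(log₂((n-d)/2)) + 2 ≤ d^(log₂(n-d)) holds, where powers are real powers. -/
theorem stmt_2 (d n : ℕ) (hd : 4 ≤ d) (hn : d + 8 ≤ n) :
    ((d : ℝ) - 1) ^ (Real.logb 2 ((n : ℝ) - d))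
      + 2 * (d : ℝ) ^ (Real.logb 2 (((n : ℝ) - d) / 2)) + 2
      ≤ (d : ℝ) ^ (Real.logb 2 ((n : ℝ) - d)) := by
  have hd4 : (4:ℝ) ≤ (d:ℝ) := by exact_mod_cast hd
  have hdpos : (0:ℝ) < (d:ℝ) := by linarith
  have hn' : (d:ℝ) + 8 ≤ (n:ℝ) := by exact_mod_cast hn
  set x : ℝ := (n:ℝ) - d with hxdef
  have hx8 : (8:ℝ) ≤ x := by simp [hxdef]; linarith
  set L := Real.logb 2 x with hL
  have hL3 : (3:ℝ) ≤ L := by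
    have h8 : Real.logb 2 8 = 3 := by
      rw [show (8:ℝ) = 2^(3:ℕ) by norm_num, Real.logb_pow,
        Real.logb_self_eq_one (by norm_num : (1:ℝ) < 2)]
      norm_num
    rw [hL, ← h8]
    exact Real.logb_le_logb_of_le (by norm_num : (1:ℝ) < 2) (by norm_num) hx8
  have hLsub : Real.logb 2 (x/2) = L - 1 := by
    rw [hL, Real.logb_div (by linarith) (by norm_num),
      Real.logb_self_eq_one (by norm_num : (1:ℝ) < 2)]
  rw [hLsub, Real.rpow_sub hdpos, Real.rpow_one]
  set t := (d:ℝ)^L with ht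
  have htpos : 0 < t := Real.rpow_pos_of_pos hdpos _
  have ht3 : (d:ℝ)^(3:ℕ) ≤ t := by
    rw [ht, ← Real.rpow_natCast (d:ℝ) 3]
    exact Real.rpow_le_rpow_of_exponent_le (by linarith) (by push_cast; linarith)
  have hkey : ((d:ℝ)-1)^L ≤ t * (((d:ℝ)-1)/d)^(3:ℕ) := by
    have h1 : ((d:ℝ)-1) = d * (((d:ℝ)-1)/d) := by field_simp
    calc ((d:ℝ)-1)^L = ((d:ℝ) * (((d:ℝ)-1)/d))^L := by rw [← h1]
      _ = t * (((d:ℝ)-1)/d)^L := Real.mul_rpow (le_of_lt hdpos) (div_nonneg (by linarith) hdpos.le)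
      _ ≤ t * (((d:ℝ)-1)/d)^(3:ℝ) := by
          apply mul_le_mul_of_nonneg_left _ (le_of_lt htpos)
          exact Real.rpow_le_rpow_of_exponent_ge (by rw [lt_div_iff₀ hdpos]; linarith)
            (by rw [div_le_one hdpos]; linarith) hL3
      _ = t * (((d:ℝ)-1)/d)^(3:ℕ) := by rw [← Real.rpow_natCast (((d:ℝ)-1)/d) 3]; norm_num
  have final : t * (((d:ℝ)-1)/d)^(3:ℕ) + 2*(t/d) + 2 ≤ t := by
    rw [← sub_nonneg]
    have heq : t - (t * (((d:ℝ)-1)/d)^(3:ℕ) + 2*(t/d) + 2)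
        = (t*((d:ℝ)^2 - 3*d + 1) - 2*(d:ℝ)^3) / (d:ℝ)^3 := by
      field_simp
      ring
    rw [heq]
    apply div_nonneg _ (by positivity)
    have h1 : (2:ℝ) ≤ (d:ℝ)^2 - 3*d + 1 := by nlinarith
    have h2 : (d:ℝ)^3 * 2 ≤ t * ((d:ℝ)^2 - 3*d + 1) :=
      mul_le_mul ht3 h1 (by norm_num) htpos.le
    linarith
  linarith [hkey]
end

section
/- Let Δ : ℕ → ℕ → ℕ be monotone nondecreasing in its second argument and satisfy the Kalai–Kleitman recurrence Δ(d, n) ≤ Δ(d-1, n-1) + 2·Δ(d, ⌊n/2⌋) + 2 for 2 ≤ d ≤ ⌊n/2⌋, together with Δ(d, n) ≤ Δ(d-1, n-1) for d ≤ n < 2d with d ≥ 2, Δ(d,d) = 0, and Δ(1, n) ≤ 1 for n ≥ 2. Then Δ(d, n) ≤ n^(log₂ d + 2) for all 2 ≤ d ≤ n (real power). -/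
private lemma kk_rpow_logb_comm {x y : ℝ} (hx : 0 < x) (hy : 0 < y) :
    x ^ Real.logb 2 y = y ^ Real.logb 2 x := by
  rw [Real.rpow_def_of_pos hx, Real.rpow_def_of_pos hy, Real.logb, Real.logb]
  ring_nf

private lemma kk_bracket {D k : ℝ} (hD : 2 ≤ D) (hk : 2 ≤ k) :
    D / (D + k) + 1 / (2 * D) + 1 / (2 * D ^ 3) ≤ 1 := by
  have hDk : 0 < D + k := by linarith
  have hD0 : (0:ℝ) < D := by linarith
  have hk0 : (0:ℝ) ≤ k := by linarith
  have key : D ^ 3 + D ^ 2 * k + D + k ≤ 2 * (D ^ 3 * k) := by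
    have a1 : D ^ 3 * 2 ≤ D ^ 3 * k := mul_le_mul_of_nonneg_left hk (by positivity)
    have a2 : D ^ 2 * k * 2 ≤ D ^ 2 * k * D := mul_le_mul_of_nonneg_left hD (by positivity)
    have a3 : D ≤ D ^ 3 := by nlinarith
    have a4 : k * 1 ≤ k * D ^ 2 := mul_le_mul_of_nonneg_left (by nlinarith) hk0
    nlinarith [a1, a2, a3, a4]
  rw [div_add_div _ _ (by positivity) (by positivity),
    div_add_div _ _ (by positivity) (by positivity), div_le_one (by positivity)]
  nlinarith [mul_le_mul_of_nonneg_left key (by linarith : (0:ℝ) ≤ 2 * D)]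

theorem stmt_6 (Δ : ℕ → ℕ → ℕ)
    (hmono : ∀ d n m, n ≤ m → Δ d n ≤ Δ d m)
    (h1 : ∀ d n, 2 ≤ d → d ≤ n / 2 → Δ d n ≤ Δ (d - 1) (n - 1) + 2 * Δ d (n / 2) + 2)
    (h2 : ∀ d n, d ≤ n → n < 2 * d → 2 ≤ d → Δ d n ≤ Δ (d - 1) (n - 1))
    (h3 : ∀ d, Δ d d = 0)
    (h4 : ∀ n, 2 ≤ n → Δ 1 n ≤ 1) :
    ∀ d n, 2 ≤ d → d ≤ n → (Δ d n : ℝ) ≤ (n : ℝ) ^ (Real.logb 2 d + 2) := by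
  suffices H : ∀ n d, 2 ≤ d → d ≤ n → (Δ d n : ℝ) ≤ (n : ℝ) ^ (Real.logb 2 d + 2) from
    fun d n hd hdn => H n d hd hdn
  intro n
  induction n using Nat.strong_induction_on with
  | _ n IH =>
  intro d hd hdn
  have hD2 : (2:ℝ) ≤ (d:ℝ) := by exact_mod_cast hd
  have hD0 : (0:ℝ) < (d:ℝ) := by linarith
  have hN1 : (1:ℝ) ≤ (n:ℝ) := by
    have : 1 ≤ n := by omega
    exact_mod_cast this
  have hN0 : (0:ℝ) < (n:ℝ) := by linarith
  have hlogd : 1 ≤ Real.logb 2 (d:ℝ) := by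
    have := Real.logb_le_logb_of_le (one_lt_two) (by norm_num : (0:ℝ) < 2) hD2
    rwa [Real.logb_self_eq_one one_lt_two] at this
  have hA0 : (0:ℝ) ≤ Real.logb 2 (d:ℝ) + 2 := by linarith
  rcases eq_or_lt_of_le hdn with rfl | hlt
  · simp only [h3, Nat.cast_zero]
    exact Real.rpow_nonneg (Nat.cast_nonneg _) _
  by_cases hc : d ≤ n / 2
  · -- main recursive case: n ≥ 2d
    have hn4 : 4 ≤ n := by omega
    have h2dn : 2 * d ≤ n := by omega
    have h2DN : 2 * (d:ℝ) ≤ (n:ℝ) := by exact_mod_cast h2dn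
    have hrec := h1 d n hd hc
    -- T2 bound
    have hIHhalf := IH (n / 2) (Nat.div_lt_self (by omega) one_lt_two) d hd hc
    have hhalf_cast : ((n / 2 : ℕ) : ℝ) ≤ (n:ℝ) / 2 := Nat.cast_div_le
    have hT2 : (Δ d (n / 2) : ℝ) ≤ ((n:ℝ) / 2) ^ (Real.logb 2 (d:ℝ) + 2) :=
      hIHhalf.trans (Real.rpow_le_rpow (Nat.cast_nonneg _) hhalf_cast hA0)
    have h2A : (2:ℝ) ^ (Real.logb 2 (d:ℝ) + 2) = 4 * (d:ℝ) := by
      rw [Real.rpow_add two_pos, Real.rpow_logb two_pos (by norm_num) hD0]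
      have : (2:ℝ) ^ (2:ℝ) = 4 := by
        rw [show (2:ℝ) = ((2:ℕ):ℝ) by norm_num, Real.rpow_natCast]; norm_num
      rw [this]; ring
    have hhalfA : ((n:ℝ) / 2) ^ (Real.logb 2 (d:ℝ) + 2)
        = (n:ℝ) ^ (Real.logb 2 (d:ℝ) + 2) * (1 / (4 * (d:ℝ))) := by
      rw [Real.div_rpow hN0.le (by norm_num), h2A]; ring
    -- T1 bound
    have hT1 : (Δ (d - 1) (n - 1) : ℝ) ≤ (n:ℝ) ^ (Real.logb 2 ((d:ℝ) - 1) + 2) := by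
      rcases Nat.lt_or_ge d 3 with hd2 | hd3
      · have hde : d = 2 := by omega
        subst hde
        have hb : Δ (2 - 1) (n - 1) ≤ 1 := h4 (n - 1) (by omega)
        have : ((2:ℕ):ℝ) - 1 = 1 := by norm_num
        rw [this, Real.logb_one, zero_add]
        calc (Δ (2 - 1) (n - 1) : ℝ) ≤ 1 := by exact_mod_cast hb
          _ ≤ (n:ℝ) ^ (2:ℝ) := Real.one_le_rpow hN1 (by norm_num)
      · have hIH1 := IH (n - 1) (by omega) (d - 1) (by omega) (by omega)
        have hcast : ((d - 1 : ℕ) : ℝ) = (d:ℝ) - 1 := by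
          rw [Nat.cast_sub (by omega), Nat.cast_one]
        have hexp0 : (0:ℝ) ≤ Real.logb 2 ((d:ℝ) - 1) + 2 := by
          have : (0:ℝ) ≤ Real.logb 2 ((d:ℝ) - 1) := by
            apply Real.logb_nonneg one_lt_two
            have : (3:ℝ) ≤ (d:ℝ) := by exact_mod_cast hd3
            linarith
          linarith
        rw [hcast] at hIH1
        refine hIH1.trans (Real.rpow_le_rpow (Nat.cast_nonneg _) ?_ hexp0)
        exact_mod_cast Nat.sub_le n 1
    -- identity relating exponent for d-1 to exponent for d
    have hDm1 : (0:ℝ) < (d:ℝ) - 1 := by linarith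
    have hid : (n:ℝ) ^ (Real.logb 2 ((d:ℝ) - 1) + 2)
        = (n:ℝ) ^ (Real.logb 2 (d:ℝ) + 2) * (((d:ℝ) - 1) / (d:ℝ)) ^ (Real.logb 2 (n:ℝ)) := by
      rw [← kk_rpow_logb_comm hN0 (by positivity), ← Real.rpow_add hN0]
      congr 1
      rw [Real.logb_div (by linarith) (by linarith)]
      ring
    -- bound the ratio term
    set k : ℝ := Real.logb 2 (d:ℝ) + 1 with hk_def
    have hk2 : (2:ℝ) ≤ k := by simp [hk_def]; linarith
    have hlogN : k ≤ Real.logb 2 (n:ℝ) := by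
      have h0 : Real.logb 2 (2 * (d:ℝ)) ≤ Real.logb 2 (n:ℝ) :=
        Real.logb_le_logb_of_le one_lt_two (by positivity) h2DN
      rw [Real.logb_mul (by norm_num) (ne_of_gt hD0),
        Real.logb_self_eq_one one_lt_two] at h0
      linarith
    have hratio : (((d:ℝ) - 1) / (d:ℝ)) ^ (Real.logb 2 (n:ℝ)) ≤ (d:ℝ) / ((d:ℝ) + k) := by
      have hb0 : (0:ℝ) < ((d:ℝ) - 1) / (d:ℝ) := by positivity
      have hb1 : ((d:ℝ) - 1) / (d:ℝ) ≤ 1 := by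
        rw [div_le_one hD0]; linarith
      have step1 : (((d:ℝ) - 1) / (d:ℝ)) ^ (Real.logb 2 (n:ℝ))
          ≤ (((d:ℝ) - 1) / (d:ℝ)) ^ k :=
        Real.rpow_le_rpow_of_exponent_ge hb0 hb1 hlogN
      refine step1.trans ?_
      have he : (1:ℝ) + 1 / ((d:ℝ) - 1) = (d:ℝ) / ((d:ℝ) - 1) := by field_simp; ring
      have hbern : 1 + k * (1 / ((d:ℝ) - 1)) ≤ ((d:ℝ) / ((d:ℝ) - 1)) ^ k := by
        rw [← he]
        exact one_add_mul_self_le_rpow_one_add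
          (le_trans (by norm_num : (-1:ℝ) ≤ 0) (by positivity)) (by linarith)
      have he2 : (1:ℝ) + k * (1 / ((d:ℝ) - 1)) = ((d:ℝ) - 1 + k) / ((d:ℝ) - 1) := by
        field_simp
      calc (((d:ℝ) - 1) / (d:ℝ)) ^ k = (((d:ℝ) / ((d:ℝ) - 1))⁻¹) ^ k := by rw [inv_div]
        _ = (((d:ℝ) / ((d:ℝ) - 1)) ^ k)⁻¹ := Real.inv_rpow (by positivity) k
        _ ≤ (((d:ℝ) - 1 + k) / ((d:ℝ) - 1))⁻¹ := by
            apply inv_anti₀ (by positivity)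
            rw [← he2]; exact hbern
        _ = ((d:ℝ) - 1) / ((d:ℝ) - 1 + k) := by rw [inv_div]
        _ ≤ (d:ℝ) / ((d:ℝ) + k) := by
            rw [div_le_div_iff₀ (by linarith) (by linarith)]
            nlinarith
    -- T3 bound
    have hA3 : (3:ℝ) ≤ Real.logb 2 (d:ℝ) + 2 := by linarith
    have hT3 : (2:ℝ) ≤ (n:ℝ) ^ (Real.logb 2 (d:ℝ) + 2) * (1 / (2 * (d:ℝ) ^ 3)) := by
      have e3 : (2 * (d:ℝ)) ^ (3:ℝ) = 8 * (d:ℝ) ^ 3 := by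
        rw [show (3:ℝ) = ((3:ℕ):ℝ) by norm_num, Real.rpow_natCast]; ring
      have l1 : (2 * (d:ℝ)) ^ (3:ℝ) ≤ (n:ℝ) ^ (3:ℝ) :=
        Real.rpow_le_rpow (by positivity) h2DN (by norm_num)
      have l2 : (n:ℝ) ^ (3:ℝ) ≤ (n:ℝ) ^ (Real.logb 2 (d:ℝ) + 2) :=
        Real.rpow_le_rpow_of_exponent_le hN1 hA3
      rw [mul_one_div, le_div_iff₀ (by positivity)]
      rw [e3] at l1
      have hD3 : (0:ℝ) ≤ (d:ℝ) ^ 3 := by positivity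
      linarith
    -- combine everything
    have hNA0 : (0:ℝ) ≤ (n:ℝ) ^ (Real.logb 2 (d:ℝ) + 2) := Real.rpow_nonneg hN0.le _
    rw [hid] at hT1
    have hc1 : (Δ (d - 1) (n - 1) : ℝ)
        ≤ (n:ℝ) ^ (Real.logb 2 (d:ℝ) + 2) * ((d:ℝ) / ((d:ℝ) + k)) :=
      hT1.trans (mul_le_mul_of_nonneg_left hratio hNA0)
    have hc2 : 2 * (Δ d (n / 2) : ℝ)
        ≤ (n:ℝ) ^ (Real.logb 2 (d:ℝ) + 2) * (1 / (2 * (d:ℝ))) := by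
      rw [hhalfA] at hT2
      calc 2 * (Δ d (n / 2) : ℝ)
          ≤ 2 * ((n:ℝ) ^ (Real.logb 2 (d:ℝ) + 2) * (1 / (4 * (d:ℝ)))) := by linarith
        _ = (n:ℝ) ^ (Real.logb 2 (d:ℝ) + 2) * (1 / (2 * (d:ℝ))) := by ring
    have hbr := kk_bracket hD2 hk2
    calc (Δ d n : ℝ) ≤ (Δ (d - 1) (n - 1) : ℝ) + 2 * (Δ d (n / 2) : ℝ) + 2 := by
          exact_mod_cast hrec
      _ ≤ (n:ℝ) ^ (Real.logb 2 (d:ℝ) + 2) * ((d:ℝ) / ((d:ℝ) + k))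
          + (n:ℝ) ^ (Real.logb 2 (d:ℝ) + 2) * (1 / (2 * (d:ℝ)))
          + (n:ℝ) ^ (Real.logb 2 (d:ℝ) + 2) * (1 / (2 * (d:ℝ) ^ 3)) := by linarith
      _ = (n:ℝ) ^ (Real.logb 2 (d:ℝ) + 2)
          * ((d:ℝ) / ((d:ℝ) + k) + 1 / (2 * (d:ℝ)) + 1 / (2 * (d:ℝ) ^ 3)) := by ring
      _ ≤ (n:ℝ) ^ (Real.logb 2 (d:ℝ) + 2) * 1 := mul_le_mul_of_nonneg_left hbr hNA0
      _ = (n:ℝ) ^ (Real.logb 2 (d:ℝ) + 2) := mul_one _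
  · -- case n < 2d
    have hn2 : n < 2 * d := by omega
    have key := h2 d n hdn hn2 hd
    rcases Nat.lt_or_ge d 3 with hd2 | hd3
    · have hde : d = 2 := by omega
      subst hde
      have hne : n = 3 := by omega
      subst hne
      have hb : Δ 2 3 ≤ 1 := key.trans (h4 2 le_rfl)
      calc (Δ 2 3 : ℝ) ≤ 1 := by exact_mod_cast hb
        _ ≤ ((3:ℕ):ℝ) ^ (Real.logb 2 ((2:ℕ):ℝ) + 2) :=
          Real.one_le_rpow (by norm_num) (by push_cast at hlogd ⊢; linarith)
    · have hIH1 := IH (n - 1) (by omega) (d - 1) (by omega) (by omega)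
      have hcast : ((d - 1 : ℕ) : ℝ) = (d:ℝ) - 1 := by
        rw [Nat.cast_sub (by omega), Nat.cast_one]
      have hexp0 : (0:ℝ) ≤ Real.logb 2 ((d:ℝ) - 1) + 2 := by
        have : (0:ℝ) ≤ Real.logb 2 ((d:ℝ) - 1) := by
          apply Real.logb_nonneg one_lt_two
          have : (3:ℝ) ≤ (d:ℝ) := by exact_mod_cast hd3
          linarith
        linarith
      rw [hcast] at hIH1
      have step1 : (Δ (d - 1) (n - 1) : ℝ) ≤ (n:ℝ) ^ (Real.logb 2 ((d:ℝ) - 1) + 2) :=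
        hIH1.trans (Real.rpow_le_rpow (Nat.cast_nonneg _) (by exact_mod_cast Nat.sub_le n 1) hexp0)
      have step2 : (n:ℝ) ^ (Real.logb 2 ((d:ℝ) - 1) + 2) ≤ (n:ℝ) ^ (Real.logb 2 (d:ℝ) + 2) := by
        apply Real.rpow_le_rpow_of_exponent_le hN1
        have : Real.logb 2 ((d:ℝ) - 1) ≤ Real.logb 2 (d:ℝ) :=
          Real.logb_le_logb_of_le one_lt_two (by linarith) (by linarith)
        linarith
      calc (Δ d n : ℝ) ≤ (Δ (d - 1) (n - 1) : ℝ) := by exact_mod_cast key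
        _ ≤ _ := step1.trans step2
end

section
/- Let Δ : ℕ → ℕ → ℕ satisfy Δ(d, n) ≤ Δ(d-1, n-1) whenever d ≤ n < 2d and d ≥ 2, and Δ(1, n) ≤ 1 for all n ≥ 1 with Δ(1,1) = 0. If additionally Δ(d', n') ≤ (n'-d')^(log₂ d') holds for all pairs with d' + n' < d + n, then Δ(d, n) ≤ (n-d)^(log₂ d) whenever d ≤ n < 2d. -/
theorem stmt_10 (Δ : ℕ → ℕ → ℕ) (d n : ℕ)
    (h2 : ∀ d' n', d' ≤ n' → n' < 2 * d' → 2 ≤ d' → Δ d' n' ≤ Δ (d' - 1) (n' - 1))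
    (h1 : ∀ n', 1 ≤ n' → Δ 1 n' ≤ 1)
    (h11 : Δ 1 1 = 0)
    (hdd : ∀ k, Δ k k = 0)
    (ih : ∀ d' n', d' + n' < d + n → 1 ≤ d' → d' ≤ n' →
      (Δ d' n' : ℝ) ≤ ((n' : ℝ) - d') ^ (Real.logb 2 d'))
    (hdn : d ≤ n) (hn : n < 2 * d) :
    (Δ d n : ℝ) ≤ ((n : ℝ) - d) ^ (Real.logb 2 d) := by
  rcases eq_or_lt_of_le hdn with rfl | hlt
  · rw [hdd]
    simpa using Real.rpow_nonneg (by simp) _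
  · have hd2 : 2 ≤ d := by
      by_contra h
      interval_cases d <;> omega
    have hstep := h2 d n hdn hn hd2
    have hih := ih (d - 1) (n - 1) (by omega) (by omega) (by omega)
    have hcast : ((n - 1 : ℕ) : ℝ) - ((d - 1 : ℕ) : ℝ) = (n : ℝ) - d := by
      have h1' : (1:ℕ) ≤ n := by omega
      have h2' : (1:ℕ) ≤ d := by omega
      push_cast [Nat.cast_sub h1', Nat.cast_sub h2']
      ring
    rw [hcast] at hih
    calc (Δ d n : ℝ) ≤ Δ (d - 1) (n - 1) := by exact_mod_cast hstep
      _ ≤ ((n : ℝ) - d) ^ (Real.logb 2 (d - 1 : ℕ)) := hih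
      _ ≤ ((n : ℝ) - d) ^ (Real.logb 2 d) := by
        apply Real.rpow_le_rpow_of_exponent_le
        · have : (d : ℝ) + 1 ≤ n := by exact_mod_cast hlt
          linarith
        · gcongr
          · norm_num
          · have : (1:ℕ) ≤ d - 1 := by omega
            exact_mod_cast Nat.lt_of_lt_of_le Nat.zero_lt_one this
          · exact_mod_cast Nat.sub_le d 1
end
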